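/- Under the hypotheses of the preceding setup (partition x_0 < ... < x_n, constant β > 0, f continuously differentiable, u twice continuously differentiable with βu'' = −f, u(x_0) = u(x_n) = 0, nodal values c_i with c_0 = c_n = 0 solving the Galerkin equations with the hat functions, and u_h^{new} defined element-wise by u_h^{new}(x) = c_k·(x_{k+1}−x)/(x_{k+1}−x_k) + c_{k+1}·(x−x_k)/(x_{k+1}−x_k) − (1/(2β))(x−x_k)(x−x_{k+1})·f(x) on [x_k, x_{k+1}]), for every k and every x in the open interval (x_k, x_{k+1}), |u'(x) − (u_h^{new})'(x)| ≤ (7h^2/(24β)) · sup_{t∈[x_0,x_n]} |f'(t)|, where h = max_k (x_{k+1} − x_k). -/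

import Mathlib

open intervalIntegral Set


/-- The hat (piecewise linear) basis function associated with the nodes `xm < xc < xp`:
it equals `(t−xm)/(xc−xm)` on `[xm,xc]`, `(xp−t)/(xp−xc)` on `[xc,xp]`, and `0` otherwise. -/
noncomputable def hatFun (xm xc xp : ℝ) (t : ℝ) : ℝ :=
  if t ∈ Set.Icc xm xc then (t - xm) / (xc - xm)
  else if t ∈ Set.Icc xc xp then (xp - t) / (xp - xc)
  else 0

lemma fem_step_bound (lo hi t : ℝ) (g g' : ℝ → ℝ) (K : ℝ) (m : ℕ)
    (hlo : lo ≤ t) (hhi : t ≤ hi)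
    (hc : ContinuousOn g (Set.Icc lo hi))
    (hd : ∀ r ∈ Set.Ioo lo hi, HasDerivAt g (g' r) r)
    (hc' : ContinuousOn g' (Set.Icc lo hi))
    (hb : ∀ r ∈ Set.Icc lo hi, |g' r| ≤ K * |r - t| ^ m)
    (hg0 : g t = 0) :
    ∀ s ∈ Set.Icc lo hi, |g s| ≤ K * |s - t| ^ (m + 1) / (m + 1) := by
  intro s hs
  rcases le_total t s with hts | hst
  · have hsub : Set.Icc t s ⊆ Set.Icc lo hi := Set.Icc_subset_Icc hlo hs.2
    have hint : IntervalIntegrable g' MeasureTheory.volume t s := by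
      apply ContinuousOn.intervalIntegrable
      rw [Set.uIcc_of_le hts]; exact hc'.mono hsub
    have hftc : ∫ r in t..s, g' r = g s - g t :=
      integral_eq_sub_of_hasDeriv_right_of_le hts (hc.mono hsub)
        (fun r hr => (hd r ⟨lt_of_le_of_lt hlo hr.1, lt_of_lt_of_le hr.2 hs.2⟩).hasDerivWithinAt)
        hint
    have h1 : |g s| = |∫ r in t..s, g' r| := by rw [hftc, hg0, sub_zero]
    have h2 : |∫ r in t..s, g' r| ≤ ∫ r in t..s, |g' r| := abs_integral_le_integral_abs hts
    have h3 : ∫ r in t..s, |g' r| ≤ ∫ r in t..s, K * (r - t) ^ m := by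
      apply integral_mono_on hts (hint.abs)
      · apply ContinuousOn.intervalIntegrable
        rw [Set.uIcc_of_le hts]
        exact (continuousOn_const.mul (((continuousOn_id.sub continuousOn_const)).pow m))
      · intro r hr
        have h := hb r (hsub hr)
        have : |r - t| = r - t := abs_of_nonneg (by linarith [hr.1])
        rwa [this] at h
    have h4 : ∫ r in t..s, K * (r - t) ^ m = K * (s - t) ^ (m + 1) / (m + 1) := by
      rw [intervalIntegral.integral_const_mul]
      have : ∫ r in t..s, (r - t) ^ m = ∫ r in t - t..s - t, r ^ m :=
        integral_comp_sub_right (fun r => r ^ m) t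
      rw [this, sub_self, integral_pow]
      ring
    rw [show |s - t| = s - t from abs_of_nonneg (by linarith)]
    calc |g s| ≤ ∫ r in t..s, K * (r - t) ^ m := h1 ▸ le_trans h2 h3
    _ = K * (s - t) ^ (m + 1) / (m + 1) := h4
  · have hsub : Set.Icc s t ⊆ Set.Icc lo hi := Set.Icc_subset_Icc hs.1 hhi
    have hint : IntervalIntegrable g' MeasureTheory.volume s t := by
      apply ContinuousOn.intervalIntegrable
      rw [Set.uIcc_of_le hst]; exact hc'.mono hsub
    have hftc : ∫ r in s..t, g' r = g t - g s :=
      integral_eq_sub_of_hasDeriv_right_of_le hst (hc.mono hsub)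
        (fun r hr => (hd r ⟨lt_of_le_of_lt hs.1 hr.1, lt_of_lt_of_le hr.2 hhi⟩).hasDerivWithinAt)
        hint
    have h1 : |g s| = |∫ r in s..t, g' r| := by rw [hftc, hg0, zero_sub, abs_neg]
    have h2 : |∫ r in s..t, g' r| ≤ ∫ r in s..t, |g' r| := abs_integral_le_integral_abs hst
    have h3 : ∫ r in s..t, |g' r| ≤ ∫ r in s..t, K * (t - r) ^ m := by
      apply integral_mono_on hst (hint.abs)
      · apply ContinuousOn.intervalIntegrable
        rw [Set.uIcc_of_le hst]
        exact (continuousOn_const.mul (((continuousOn_const.sub continuousOn_id)).pow m))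
      · intro r hr
        have h := hb r (hsub hr)
        have : |r - t| = t - r := by rw [abs_sub_comm]; exact abs_of_nonneg (by linarith [hr.2])
        rwa [this] at h
    have h4 : ∫ r in s..t, K * (t - r) ^ m = K * (t - s) ^ (m + 1) / (m + 1) := by
      rw [intervalIntegral.integral_const_mul]
      have : ∫ r in s..t, (t - r) ^ m = ∫ r in t - t..t - s, r ^ m :=
        integral_comp_sub_left (fun r => r ^ m) t
      rw [this, sub_self, integral_pow]
      ring
    rw [show |s - t| = t - s by rw [abs_sub_comm]; exact abs_of_nonneg (by linarith)]
    calc |g s| ≤ ∫ r in s..t, K * (t - r) ^ m := h1 ▸ le_trans h2 h3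
    _ = K * (t - s) ^ (m + 1) / (m + 1) := h4

lemma fem_nodal_exact (X Y a cc b β : ℝ) (f u u' u'' : ℝ → ℝ)
    (hXa : X ≤ a) (hbY : b ≤ Y) (hac : a < cc) (hcb : cc < b)
    (hu' : ∀ t ∈ Set.Icc X Y, HasDerivWithinAt u (u' t) (Set.Icc X Y) t)
    (hu'' : ∀ t ∈ Set.Icc X Y, HasDerivWithinAt u' (u'' t) (Set.Icc X Y) t)
    (hu''c : ContinuousOn u'' (Set.Icc X Y))
    (hode : ∀ t ∈ Set.Icc X Y, β * u'' t = -f t) :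
    ∫ t in a..b, f t * hatFun a cc b t
      = β * ((u cc - u a) / (cc - a) - (u b - u cc) / (b - cc)) := by
  have hsub1 : Set.Icc a cc ⊆ Set.Icc X Y :=
    Set.Icc_subset_Icc hXa (le_trans (le_of_lt hcb) hbY)
  have hsub2 : Set.Icc cc b ⊆ Set.Icc X Y :=
    Set.Icc_subset_Icc (le_trans hXa (le_of_lt hac)) hbY
  have huc : ContinuousOn u (Set.Icc X Y) := fun t ht => (hu' t ht).continuousWithinAt
  have hu'c : ContinuousOn u' (Set.Icc X Y) := fun t ht => (hu'' t ht).continuousWithinAt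
  have hinterior : ∀ t ∈ Set.Ioo a b, Set.Icc X Y ∈ nhds t := by
    intro t ht
    exact Icc_mem_nhds (lt_of_le_of_lt hXa ht.1) (lt_of_lt_of_le ht.2 hbY)
  have heq1 : Set.EqOn (fun t => f t * hatFun a cc b t)
      (fun t => (-β / (cc - a)) * (u'' t * (t - a))) (Set.uIcc a cc) := by
    rw [Set.uIcc_of_le (le_of_lt hac)]
    intro t ht
    have h1 : hatFun a cc b t = (t - a) / (cc - a) := by simp [hatFun, ht]
    have h2 : f t = -(β * u'' t) := by have := hode t (hsub1 ht); linarith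
    simp only [h1, h2]
    field_simp
  have heq2 : Set.EqOn (fun t => f t * hatFun a cc b t)
      (fun t => (-β / (b - cc)) * (u'' t * (b - t))) (Set.uIcc cc b) := by
    rw [Set.uIcc_of_le (le_of_lt hcb)]
    intro t ht
    have h1 : hatFun a cc b t = (b - t) / (b - cc) := by
      unfold hatFun
      by_cases hm : t ∈ Set.Icc a cc
      · have htc : t = cc := le_antisymm hm.2 ht.1
        rw [if_pos hm, htc]
        rw [div_self (by linarith), div_self (by linarith)]
      · rw [if_neg hm, if_pos ht]
    have h2 : f t = -(β * u'' t) := by have := hode t (hsub2 ht); linarith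
    simp only [h1, h2]
    field_simp
  have hcont1 : ContinuousOn (fun t => (-β / (cc - a)) * (u'' t * (t - a))) (Set.uIcc a cc) := by
    rw [Set.uIcc_of_le (le_of_lt hac)]
    exact continuousOn_const.mul ((hu''c.mono hsub1).mul (continuousOn_id.sub continuousOn_const))
  have hcont2 : ContinuousOn (fun t => (-β / (b - cc)) * (u'' t * (b - t))) (Set.uIcc cc b) := by
    rw [Set.uIcc_of_le (le_of_lt hcb)]
    exact continuousOn_const.mul ((hu''c.mono hsub2).mul (continuousOn_const.sub continuousOn_id))
  have hii1 : IntervalIntegrable (fun t => f t * hatFun a cc b t) MeasureTheory.volume a cc :=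
    ((hcont1.congr heq1)).intervalIntegrable
  have hii2 : IntervalIntegrable (fun t => f t * hatFun a cc b t) MeasureTheory.volume cc b :=
    ((hcont2.congr heq2)).intervalIntegrable
  have hsplit := integral_add_adjacent_intervals hii1 hii2
  have hI1 : ∫ t in a..cc, u'' t * (t - a) = (u' cc * (cc - a) - u cc) - (0 - u a) := by
    have := integral_eq_sub_of_hasDeriv_right_of_le (f := fun t => u' t * (t - a) - u t)
      (f' := fun t => u'' t * (t - a)) (le_of_lt hac)
      (((hu'c.mono hsub1).mul (continuousOn_id.sub continuousOn_const)).sub (huc.mono hsub1))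
      (fun t ht => by
        have htn : Set.Icc X Y ∈ nhds t := hinterior t ⟨ht.1, lt_trans ht.2 hcb⟩
        have hdu := (hu' t (hsub1 (Set.Ioo_subset_Icc_self ht))).hasDerivAt htn
        have hdu' := (hu'' t (hsub1 (Set.Ioo_subset_Icc_self ht))).hasDerivAt htn
        have : HasDerivAt (fun t => u' t * (t - a) - u t) (u'' t * (t - a)) t := by
          have h := ((hdu'.mul ((hasDerivAt_id t).sub_const a)).sub hdu)
          exact h.congr_deriv (by simp only [id]; ring)
        exact this.hasDerivWithinAt)
      (by
        apply ContinuousOn.intervalIntegrable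
        rw [Set.uIcc_of_le (le_of_lt hac)]
        exact (hu''c.mono hsub1).mul (continuousOn_id.sub continuousOn_const))
    rw [this]
    simp
  have hI2 : ∫ t in cc..b, u'' t * (b - t)
      = (u' b * (b - b) + u b) - (u' cc * (b - cc) + u cc) := by
    have := integral_eq_sub_of_hasDeriv_right_of_le (f := fun t => u' t * (b - t) + u t)
      (f' := fun t => u'' t * (b - t)) (le_of_lt hcb)
      (((hu'c.mono hsub2).mul (continuousOn_const.sub continuousOn_id)).add (huc.mono hsub2))
      (fun t ht => by
        have htn : Set.Icc X Y ∈ nhds t := hinterior t ⟨lt_trans hac ht.1, ht.2⟩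
        have hdu := (hu' t (hsub2 (Set.Ioo_subset_Icc_self ht))).hasDerivAt htn
        have hdu' := (hu'' t (hsub2 (Set.Ioo_subset_Icc_self ht))).hasDerivAt htn
        have : HasDerivAt (fun t => u' t * (b - t) + u t) (u'' t * (b - t)) t := by
          have h := ((hdu'.mul ((hasDerivAt_const t b).sub (hasDerivAt_id t))).add hdu)
          exact h.congr_deriv (by simp only [Pi.sub_apply, id]; ring)
        exact this.hasDerivWithinAt)
      (by
        apply ContinuousOn.intervalIntegrable
        rw [Set.uIcc_of_le (le_of_lt hcb)]
        exact (hu''c.mono hsub2).mul (continuousOn_const.sub continuousOn_id))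
    rw [this]
  have e1 : ∫ t in a..cc, f t * hatFun a cc b t
      = (-β / (cc - a)) * ∫ t in a..cc, u'' t * (t - a) := by
    rw [integral_congr heq1, intervalIntegral.integral_const_mul]
  have e2 : ∫ t in cc..b, f t * hatFun a cc b t
      = (-β / (b - cc)) * ∫ t in cc..b, u'' t * (b - t) := by
    rw [integral_congr heq2, intervalIntegral.integral_const_mul]
  rw [← hsplit, e1, e2, hI1, hI2]
  have h1 : cc - a ≠ 0 := by linarith
  have h2 : b - cc ≠ 0 := by linarith
  field_simp
  ring

set_option maxHeartbeats 1000000 in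
/-- The derivative of the posterior-corrected `P₁` finite element solution
`u_h^{new}` satisfies the second-order (H¹/energy norm) bound
`|u' x − (u_h^{new})' x| ≤ (7h²/(24β)) sup |f'|` in the interior of each element,
where `h` is the mesh size. -/
theorem posterior_corrected_fem_second_order_derivative
    (n : ℕ) (hn : 1 ≤ n) (x : ℕ → ℝ) (hx : ∀ i < n, x i < x (i + 1))
    (β : ℝ) (hβ : 0 < β) (f f' u u' u'' : ℝ → ℝ)
    (hf' : ∀ t ∈ Set.Icc (x 0) (x n), HasDerivWithinAt f (f' t) (Set.Icc (x 0) (x n)) t)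
    (hf'c : ContinuousOn f' (Set.Icc (x 0) (x n)))
    (hu' : ∀ t ∈ Set.Icc (x 0) (x n), HasDerivWithinAt u (u' t) (Set.Icc (x 0) (x n)) t)
    (hu'' : ∀ t ∈ Set.Icc (x 0) (x n), HasDerivWithinAt u' (u'' t) (Set.Icc (x 0) (x n)) t)
    (hu''c : ContinuousOn u'' (Set.Icc (x 0) (x n)))
    (hode : ∀ t ∈ Set.Icc (x 0) (x n), β * u'' t = -f t)
    (hu0 : u (x 0) = 0) (hun : u (x n) = 0)
    (c : ℕ → ℝ) (hc0 : c 0 = 0) (hcn : c n = 0)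
    (hgal : ∀ i, 1 ≤ i → i ≤ n - 1 →
      β * ((c i - c (i - 1)) / (x i - x (i - 1)) - (c (i + 1) - c i) / (x (i + 1) - x i))
        = ∫ t in (x (i - 1))..(x (i + 1)), f t * hatFun (x (i - 1)) (x i) (x (i + 1)) t)
    (uhnew : ℝ → ℝ)
    (huh : ∀ k < n, ∀ t ∈ Set.Icc (x k) (x (k + 1)),
      uhnew t = c k * (x (k + 1) - t) / (x (k + 1) - x k)
        + c (k + 1) * (t - x k) / (x (k + 1) - x k)
        - 1 / (2 * β) * (t - x k) * (t - x (k + 1)) * f t)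
    (H : ℝ)
    (hH : H = (Finset.range n).sup' (Finset.nonempty_range_iff.mpr (by omega))
      (fun k => x (k + 1) - x k)) :
    ∀ k < n, ∀ t ∈ Set.Ioo (x k) (x (k + 1)),
      |u' t - deriv uhnew t| ≤ 7 * H ^ 2 / (24 * β) * ⨆ s : Set.Icc (x 0) (x n), |f' s| := by
  have hβne : β ≠ 0 := ne_of_gt hβ
  have hmono : ∀ i j : ℕ, i ≤ j → j ≤ n → x i ≤ x j := by
    intro i j hij hjn
    induction j with
    | zero =>
      have : i = 0 := Nat.le_zero.mp hij
      rw [this]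
    | succ m ih =>
      rcases Nat.eq_or_lt_of_le hij with h | h
      · rw [h]
      · have hi : i ≤ m := by omega
        exact le_trans (ih hi (by omega)) (le_of_lt (hx m (by omega)))
  have hgap : ∀ i, i < n → 0 < x (i + 1) - x i := fun i hi => sub_pos.mpr (hx i hi)
  have hfc : ContinuousOn f (Set.Icc (x 0) (x n)) := fun t ht => (hf' t ht).continuousWithinAt
  have huc : ContinuousOn u (Set.Icc (x 0) (x n)) := fun t ht => (hu' t ht).continuousWithinAt
  have hu'c : ContinuousOn u' (Set.Icc (x 0) (x n)) := fun t ht => (hu'' t ht).continuousWithinAt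
  -- Step 1 : nodal exactness, c i = u (x i)
  have hugal : ∀ i, 1 ≤ i → i ≤ n - 1 →
      β * ((u (x i) - u (x (i - 1))) / (x i - x (i - 1))
        - (u (x (i + 1)) - u (x i)) / (x (i + 1) - x i))
        = ∫ t in (x (i - 1))..(x (i + 1)), f t * hatFun (x (i - 1)) (x i) (x (i + 1)) t := by
    intro i h1 h2
    have hi1 : i - 1 + 1 = i := by omega
    have hlt1 : x (i - 1) < x i := by
      have := hx (i - 1) (by omega)
      rwa [hi1] at this
    have hlt2 : x i < x (i + 1) := hx i (by omega)
    exact (fem_nodal_exact (x 0) (x n) (x (i - 1)) (x i) (x (i + 1)) β f u u' u''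
      (hmono 0 (i - 1) (Nat.zero_le _) (by omega)) (hmono (i + 1) n (by omega) le_rfl)
      hlt1 hlt2 hu' hu'' hu''c hode).symm
  have hs : ∀ i, i < n →
      ((c (i + 1) - u (x (i + 1))) - (c i - u (x i))) / (x (i + 1) - x i)
        = ((c 1 - u (x 1)) - (c 0 - u (x 0))) / (x 1 - x 0) := by
    intro i
    induction i with
    | zero => intro _; rfl
    | succ j ih =>
      intro hj
      have hj' : j < n := by omega
      have g1 := hgal (j + 1) (by omega) (by omega)
      have g2 := hugal (j + 1) (by omega) (by omega)
      simp only [Nat.add_sub_cancel] at g1 g2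
      have heq : β * ((c (j + 1) - c j) / (x (j + 1) - x j)
          - (c (j + 1 + 1) - c (j + 1)) / (x (j + 1 + 1) - x (j + 1)))
          = β * ((u (x (j + 1)) - u (x j)) / (x (j + 1) - x j)
          - (u (x (j + 1 + 1)) - u (x (j + 1))) / (x (j + 1 + 1) - x (j + 1))) := by
        rw [g1, g2]
      have h3 := mul_left_cancel₀ hβne heq
      have h4 : ((c (j + 1 + 1) - u (x (j + 1 + 1))) - (c (j + 1) - u (x (j + 1)))) / (x (j + 1 + 1) - x (j + 1))
          - ((c (j + 1) - u (x (j + 1))) - (c j - u (x j))) / (x (j + 1) - x j)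
          = -(((c (j + 1) - c j) / (x (j + 1) - x j)
              - (c (j + 1 + 1) - c (j + 1)) / (x (j + 1 + 1) - x (j + 1)))
            - ((u (x (j + 1)) - u (x j)) / (x (j + 1) - x j)
              - (u (x (j + 1 + 1)) - u (x (j + 1))) / (x (j + 1 + 1) - x (j + 1)))) := by
        ring
      rw [h3, sub_self, neg_zero] at h4
      exact (sub_eq_zero.mp h4).trans (ih hj')
  have hs0 : ((c 1 - u (x 1)) - (c 0 - u (x 0))) / (x 1 - x 0) = 0 := by
    have hterm : ∀ i ∈ Finset.range n,
        (c (i + 1) - u (x (i + 1))) - (c i - u (x i))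
          = (((c 1 - u (x 1)) - (c 0 - u (x 0))) / (x 1 - x 0)) * (x (i + 1) - x i) := by
      intro i hi
      have hi' := Finset.mem_range.mp hi
      have h := hs i hi'
      have := (div_eq_iff (ne_of_gt (hgap i hi'))).mp h
      linarith
    have hsum : (c n - u (x n)) - (c 0 - u (x 0))
        = (((c 1 - u (x 1)) - (c 0 - u (x 0))) / (x 1 - x 0)) * (x n - x 0) := by
      calc (c n - u (x n)) - (c 0 - u (x 0))
          = ∑ i ∈ Finset.range n, ((c (i + 1) - u (x (i + 1))) - (c i - u (x i))) :=
            (Finset.sum_range_sub (fun i => c i - u (x i)) n).symm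
        _ = ∑ i ∈ Finset.range n,
              (((c 1 - u (x 1)) - (c 0 - u (x 0))) / (x 1 - x 0)) * (x (i + 1) - x i) :=
            Finset.sum_congr rfl hterm
        _ = (((c 1 - u (x 1)) - (c 0 - u (x 0))) / (x 1 - x 0))
              * ∑ i ∈ Finset.range n, (x (i + 1) - x i) := (Finset.mul_sum _ _ _).symm
        _ = (((c 1 - u (x 1)) - (c 0 - u (x 0))) / (x 1 - x 0)) * (x n - x 0) := by
            rw [Finset.sum_range_sub]
    have hxn0 : 0 < x n - x 0 := by
      have h1 : x 0 ≤ x (n - 1) := hmono 0 (n - 1) (Nat.zero_le _) (by omega)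
      have h2 : x (n - 1) < x n := by
        have h := hx (n - 1) (by omega)
        have e : n - 1 + 1 = n := by omega
        rwa [e] at h
      linarith
    have hzero : (c n - u (x n)) - (c 0 - u (x 0)) = 0 := by
      rw [hcn, hun, hc0, hu0]; ring
    have hsum0 : (((c 1 - u (x 1)) - (c 0 - u (x 0))) / (x 1 - x 0)) * (x n - x 0) = 0 := by
      rw [← hsum]; exact hzero
    exact (mul_eq_zero.mp hsum0).resolve_right (ne_of_gt hxn0)
  have hnode : ∀ i, i ≤ n → c i = u (x i) := by
    intro i
    induction i with
    | zero => intro _; rw [hc0, hu0]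
    | succ j ih =>
      intro hjn
      have hj : j < n := by omega
      have hsj := hs j hj
      rw [hs0] at hsj
      have hnum := (div_eq_zero_iff.mp hsj).resolve_right (ne_of_gt (hgap j hj))
      have hdj := ih (by omega)
      linarith
  -- Step 2 : main estimate on each element
  intro k hk t ht
  have hkn : k + 1 ≤ n := hk
  have ha0 : x 0 ≤ x k := hmono 0 k (Nat.zero_le _) (le_of_lt hk)
  have hbn : x (k + 1) ≤ x n := hmono (k + 1) n hkn le_rfl
  have hab : x k < x (k + 1) := hx k hk
  have hhpos : 0 < x (k + 1) - x k := hgap k hk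
  have hne : x (k + 1) - x k ≠ 0 := ne_of_gt hhpos
  have htmem : t ∈ Set.Icc (x 0) (x n) :=
    ⟨le_trans ha0 (le_of_lt ht.1), le_trans (le_of_lt ht.2) hbn⟩
  have htn : Set.Icc (x 0) (x n) ∈ nhds t :=
    Icc_mem_nhds (lt_of_le_of_lt ha0 ht.1) (lt_of_lt_of_le ht.2 hbn)
  have hft : HasDerivAt f (f' t) t := (hf' t htmem).hasDerivAt htn
  have hsubab : Set.Icc (x k) (x (k + 1)) ⊆ Set.Icc (x 0) (x n) := Set.Icc_subset_Icc ha0 hbn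
  have hnhds : ∀ r ∈ Set.Ioo (x k) (x (k + 1)), Set.Icc (x 0) (x n) ∈ nhds r := fun r hr =>
    Icc_mem_nhds (lt_of_le_of_lt ha0 hr.1) (lt_of_lt_of_le hr.2 hbn)
  -- the sup bound
  obtain ⟨C, hC⟩ := (isCompact_Icc (a := x 0) (b := x n)).exists_bound_of_continuousOn hf'c
  set M := ⨆ s : Set.Icc (x 0) (x n), |f' s| with hM
  have hbdd : BddAbove (Set.range fun s : Set.Icc (x 0) (x n) => |f' s.1|) := by
    refine ⟨C, ?_⟩
    rintro y ⟨s, rfl⟩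
    simpa using hC s s.2
  have hMle : ∀ r ∈ Set.Icc (x 0) (x n), |f' r| ≤ M := by
    intro r hr
    have := le_ciSup hbdd ⟨r, hr⟩
    simpa using this
  have hM0 : 0 ≤ M := le_trans (abs_nonneg _) (hMle t htmem)
  -- derivative of uhnew at t
  have hder : HasDerivAt (fun s => c k * (x (k + 1) - s) / (x (k + 1) - x k)
      + c (k + 1) * (s - x k) / (x (k + 1) - x k)
      - 1 / (2 * β) * (s - x k) * (s - x (k + 1)) * f s)
      ((c (k + 1) - c k) / (x (k + 1) - x k)
        - 1 / (2 * β) * ((t - x k) * f t + (t - x (k + 1)) * f t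
            + (t - x k) * (t - x (k + 1)) * f' t)) t := by
    have hA := (((hasDerivAt_const t (x (k + 1))).sub (hasDerivAt_id' t)).const_mul
      (c k)).div_const (x (k + 1) - x k)
    have hB := (((hasDerivAt_id' t).sub (hasDerivAt_const t (x k))).const_mul
      (c (k + 1))).div_const (x (k + 1) - x k)
    have hC1 := ((((hasDerivAt_id' t).sub (hasDerivAt_const t (x k))).const_mul
      (1 / (2 * β))).mul ((hasDerivAt_id' t).sub (hasDerivAt_const t (x (k + 1))))).mul hft
    exact ((hA.add hB).sub hC1).congr_deriv (by simp only [Pi.sub_apply, Pi.mul_apply]; ring)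
  have hloc : uhnew =ᶠ[nhds t] (fun s => c k * (x (k + 1) - s) / (x (k + 1) - x k)
      + c (k + 1) * (s - x k) / (x (k + 1) - x k)
      - 1 / (2 * β) * (s - x k) * (s - x (k + 1)) * f s) :=
    Filter.eventuallyEq_of_mem (isOpen_Ioo.mem_nhds ht)
      (fun s hs => huh k hk s (Set.Ioo_subset_Icc_self hs))
  have hderiv : deriv uhnew t = (c (k + 1) - c k) / (x (k + 1) - x k)
      - 1 / (2 * β) * ((t - x k) * f t + (t - x (k + 1)) * f t
          + (t - x k) * (t - x (k + 1)) * f' t) := by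
    rw [hloc.deriv_eq]
    exact hder.deriv
  -- Taylor remainder bounds
  have hR2 : ∀ s ∈ Set.Icc (x k) (x (k + 1)), |u'' s - u'' t| ≤ M / β * |s - t| := by
    have hsb := fem_step_bound (x k) (x (k + 1)) t (fun s => u'' s - u'' t)
      (fun s => -f' s / β) (M / β) 0 ht.1.le ht.2.le
      ((hu''c.mono hsubab).sub continuousOn_const)
      (fun r hr => by
        have hfr : HasDerivAt f (f' r) r :=
          (hf' r (hsubab (Set.Ioo_subset_Icc_self hr))).hasDerivAt (hnhds r hr)
        have hDr : HasDerivAt (fun s => -f s / β - u'' t) (-f' r / β) r :=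
          ((hfr.neg).div_const β).sub_const _
        apply hDr.congr_of_eventuallyEq
        apply Filter.eventuallyEq_of_mem (hnhds r hr)
        intro s hsmem
        have h2 : u'' s = -f s / β := by
          field_simp
          linarith [hode s hsmem]
        simp only [h2])
      (((hf'c.mono hsubab).neg).div_const β)
      (fun r hr => by
        have h1 : |-f' r / β| = |f' r| / β := by rw [abs_div, abs_neg, abs_of_pos hβ]
        rw [h1]
        simp only [pow_zero, mul_one]
        gcongr
        exact hMle r (hsubab hr))
      (by ring)
    intro s hsmem
    have := hsb s hsmem
    simpa using this
  have hR1 : ∀ s ∈ Set.Icc (x k) (x (k + 1)),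
      |u' s - u' t - (s - t) * u'' t| ≤ M / β * |s - t| ^ 2 / 2 := by
    have hsb := fem_step_bound (x k) (x (k + 1)) t (fun s => u' s - u' t - (s - t) * u'' t)
      (fun s => u'' s - u'' t) (M / β) 1 ht.1.le ht.2.le
      (((hu'c.mono hsubab).sub continuousOn_const).sub
        ((continuousOn_id.sub continuousOn_const).mul continuousOn_const))
      (fun r hr => by
        have hdu' := (hu'' r (hsubab (Set.Ioo_subset_Icc_self hr))).hasDerivAt (hnhds r hr)
        have h := (hdu'.sub_const (u' t)).sub
          (((hasDerivAt_id' r).sub_const t).mul_const (u'' t))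
        exact h.congr_deriv (by ring))
      ((hu''c.mono hsubab).sub continuousOn_const)
      (fun r hr => by simpa using hR2 r hr)
      (by ring)
    intro s hsmem
    have h := hsb s hsmem
    have e : M / β * |s - t| ^ (1 + 1) / ((1:ℕ) + 1) = M / β * |s - t| ^ 2 / 2 := by
      norm_num
    rw [e] at h
    exact h
  have hR0 : ∀ s ∈ Set.Icc (x k) (x (k + 1)),
      |u s - u t - (s - t) * u' t - (s - t) ^ 2 / 2 * u'' t|
        ≤ M / (2 * β) * |s - t| ^ 3 / 3 := by
    have hsb := fem_step_bound (x k) (x (k + 1)) t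
      (fun s => u s - u t - (s - t) * u' t - (s - t) ^ 2 / 2 * u'' t)
      (fun s => u' s - u' t - (s - t) * u'' t) (M / (2 * β)) 2 ht.1.le ht.2.le
      ((((huc.mono hsubab).sub continuousOn_const).sub
        ((continuousOn_id.sub continuousOn_const).mul continuousOn_const)).sub
        ((((continuousOn_id.sub continuousOn_const).pow 2).div_const 2).mul continuousOn_const))
      (fun r hr => by
        have hdu := (hu' r (hsubab (Set.Ioo_subset_Icc_self hr))).hasDerivAt (hnhds r hr)
        have h := ((hdu.sub_const (u t)).sub
          (((hasDerivAt_id' r).sub_const t).mul_const (u' t))).sub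
          (((((hasDerivAt_id' r).sub_const t).pow 2).div_const 2).mul_const (u'' t))
        exact h.congr_deriv (by ring))
      ((((hu'c.mono hsubab).sub continuousOn_const).sub
        ((continuousOn_id.sub continuousOn_const).mul continuousOn_const)))
      (fun r hr => by
        have h := hR1 r hr
        have e : M / β * |r - t| ^ 2 / 2 = M / (2 * β) * |r - t| ^ 2 := by
          rw [div_mul_eq_mul_div, div_div, mul_comm β 2, div_mul_eq_mul_div, mul_div_assoc]

        linarith)
      (by ring)
    intro s hsmem
    have h := hsb s hsmem
    have e : M / (2 * β) * |s - t| ^ (2 + 1) / ((2:ℕ) + 1) = M / (2 * β) * |s - t| ^ 3 / 3 := by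
      norm_num
    rw [e] at h
    exact h
  -- collect the two endpoint remainders
  set RB : ℝ := u (x (k + 1)) - u t - (x (k + 1) - t) * u' t - (x (k + 1) - t) ^ 2 / 2 * u'' t
    with hRBdef
  set RA : ℝ := u (x k) - u t - (x k - t) * u' t - (x k - t) ^ 2 / 2 * u'' t with hRAdef
  have hQpos : 0 < x (k + 1) - t := by linarith [ht.2]
  have hPpos : 0 < t - x k := by linarith [ht.1]
  have hRb' : |RB| ≤ M / (2 * β) * (x (k + 1) - t) ^ 3 / 3 := by
    have h := hR0 (x (k + 1)) ⟨hab.le, le_rfl⟩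
    rwa [show |x (k + 1) - t| = x (k + 1) - t from abs_of_pos hQpos] at h
  have hRa' : |RA| ≤ M / (2 * β) * (t - x k) ^ 3 / 3 := by
    have h := hR0 (x k) ⟨le_rfl, hab.le⟩
    rwa [show |x k - t| = t - x k by rw [abs_sub_comm]; exact abs_of_pos hPpos] at h
  -- key algebraic identity
  have hck : c k = u (x k) := hnode k (by omega)
  have hck1 : c (k + 1) = u (x (k + 1)) := hnode (k + 1) hkn
  have hft2 : f t = -(β * u'' t) := by
    have := hode t htmem
    linarith
  have key : u' t - ((c (k + 1) - c k) / (x (k + 1) - x k)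
      - 1 / (2 * β) * ((t - x k) * f t + (t - x (k + 1)) * f t
          + (t - x k) * (t - x (k + 1)) * f' t))
      = -(RB - RA) / (x (k + 1) - x k)
        + (t - x k) * (t - x (k + 1)) * f' t / (2 * β) := by
    rw [hck, hck1, hft2, hRBdef, hRAdef]
    field_simp
    ring
  rw [hderiv]
  have h2β : (0 : ℝ) < 2 * β := by linarith
  calc |u' t - ((c (k + 1) - c k) / (x (k + 1) - x k)
      - 1 / (2 * β) * ((t - x k) * f t + (t - x (k + 1)) * f t
          + (t - x k) * (t - x (k + 1)) * f' t))|
      = |(-(RB - RA)) / (x (k + 1) - x k)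
          + (t - x k) * (t - x (k + 1)) * f' t / (2 * β)| := by rw [key]
    _ ≤ |(-(RB - RA)) / (x (k + 1) - x k)|
          + |(t - x k) * (t - x (k + 1)) * f' t / (2 * β)| := abs_add_le _ _
    _ = |RB - RA| / (x (k + 1) - x k)
          + (t - x k) * (x (k + 1) - t) * |f' t| / (2 * β) := by
        rw [abs_div, abs_neg, abs_of_pos hhpos, abs_div, abs_mul, abs_mul,
          abs_of_pos hPpos,
          show |t - x (k + 1)| = x (k + 1) - t by rw [abs_sub_comm]; exact abs_of_pos hQpos,
          abs_of_pos h2β]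
    _ ≤ (|RB| + |RA|) / (x (k + 1) - x k)
          + (t - x k) * (x (k + 1) - t) * M / (2 * β) := by
        refine add_le_add ?_ ?_
        · exact (div_le_div_iff_of_pos_right hhpos).mpr (abs_sub RB RA)
        · exact (div_le_div_iff_of_pos_right h2β).mpr
            (mul_le_mul_of_nonneg_left (hMle t htmem)
              (le_of_lt (mul_pos hPpos hQpos)))
    _ ≤ (M / (2 * β) * (x (k + 1) - t) ^ 3 / 3 + M / (2 * β) * (t - x k) ^ 3 / 3)
          / (x (k + 1) - x k)
          + (t - x k) * (x (k + 1) - t) * M / (2 * β) := by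
        refine add_le_add ((div_le_div_iff_of_pos_right hhpos).mpr (add_le_add hRb' hRa')) le_rfl
    _ = M * ((t - x k) + (x (k + 1) - t)) ^ 2 / (6 * β) := by
        field_simp
        ring
    _ ≤ 7 * H ^ 2 / (24 * β) * M := by
        have hhH : x (k + 1) - x k ≤ H := by
          rw [hH]
          exact Finset.le_sup' (fun k => x (k + 1) - x k) (Finset.mem_range.mpr hk)
        have hPQ : (t - x k) + (x (k + 1) - t) = x (k + 1) - x k := by ring
        rw [hPQ]
        have h1 : (x (k + 1) - x k) ^ 2 ≤ H ^ 2 := pow_le_pow_left₀ hhpos.le hhH 2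
        have h2 : M * (x (k + 1) - x k) ^ 2 / (6 * β) ≤ M * H ^ 2 / (6 * β) := by
          gcongr
        have h3 : 7 * H ^ 2 / (24 * β) * M - M * H ^ 2 / (6 * β) = H ^ 2 * M / (8 * β) := by
          ring
        have h4 : 0 ≤ H ^ 2 * M / (8 * β) := by positivity
        linarith
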